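/- Assume either (0 < β < 1 and −min(1/2, β) < δ ≤ 0) or (β = δ = 0). Let (μ_t)_{t>0} be an ATS mixing family and σ̂ an ATM implied volatility for (μ_t). Then σ̂_t → 0 as t → 0⁺. -/

import Mathlib

open MeasureTheory Real Filter Set Topology Asymptotics

/-- The ATS Laplace transform `L_t(u)` with parameters `α ∈ (0,1)`, `k̄ > 0`, `β ∈ ℝ`,
where `k_t = k̄·t^β`. -/
noncomputable def ATSLaplace (α kbar β : ℝ) (t u : ℝ) : ℝ :=
  Real.exp ((t / (kbar * t ^ β)) * ((1 - α) / α) *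
    (1 - (1 + u * (kbar * t ^ β) / ((1 - α) * t)) ^ α))

/-- Standard normal cumulative distribution function. -/
noncomputable def stdN (z : ℝ) : ℝ :=
  (Real.sqrt (2 * Real.pi))⁻¹ * ∫ x in Set.Iic z, Real.exp (-x ^ 2 / 2)

/-- Standard normal probability density function. -/
noncomputable def stdNd (z : ℝ) : ℝ :=
  (Real.sqrt (2 * Real.pi))⁻¹ * Real.exp (-z ^ 2 / 2)

/-- The drift `φ_t`, defined by `φ_t·t = −ln L_t(t·σ̄²·η_t)` with `η_t = η̄·t^δ`. -/
noncomputable def ATSphi (α kbar σbar ηbar β δ : ℝ) (t : ℝ) : ℝ :=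
  -Real.log (ATSLaplace α kbar β t (t * σbar ^ 2 * (ηbar * t ^ δ))) / t

/-- The quantity `l_t^z = −σ̄·η_t·√(z·t) + φ_t·√t/(σ̄·√z)`. -/
noncomputable def ATSl (α kbar σbar ηbar β δ : ℝ) (t z : ℝ) : ℝ :=
  -(σbar * (ηbar * t ^ δ)) * Real.sqrt (z * t) +
    ATSphi α kbar σbar ηbar β δ t * Real.sqrt t / (σbar * Real.sqrt z)

/-- The ATM ATS call price `C_t`. -/
noncomputable def ATSCall (α kbar σbar ηbar β δ : ℝ) (μ : Measure ℝ) (t : ℝ) : ℝ :=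
  ∫ z, (Real.exp (ATSphi α kbar σbar ηbar β δ t * t - t * σbar ^ 2 * (ηbar * t ^ δ) * z) *
      stdN (ATSl α kbar σbar ηbar β δ t z + σbar * Real.sqrt (z * t) / 2) -
      stdN (ATSl α kbar σbar ηbar β δ t z - σbar * Real.sqrt (z * t) / 2)) ∂μ

/-- The skew term `ξ̂_t`. -/
noncomputable def ATSSkew (α kbar σbar ηbar β δ : ℝ) (μ : Measure ℝ) (σhat : ℝ → ℝ)
    (t : ℝ) : ℝ :=
  (stdN (-(σhat t * Real.sqrt t / 2)) -
      ∫ z, stdN (ATSl α kbar σbar ηbar β δ t z - σbar * Real.sqrt (z * t) / 2) ∂μ) /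
    stdNd (-(σhat t * Real.sqrt t / 2))

open scoped ENNReal NNReal

section AuxGauss
lemma gauss_eq : (fun x : ℝ => Real.exp (-x ^ 2 / 2)) = fun x : ℝ => Real.exp (-(1/2) * x ^ 2) := by
  funext x; ring_nf

lemma gauss_integrable : Integrable (fun x : ℝ => Real.exp (-x ^ 2 / 2)) := by
  rw [gauss_eq]; exact integrable_exp_neg_mul_sq (by norm_num)

lemma gauss_total : (∫ x : ℝ, Real.exp (-x ^ 2 / 2)) = Real.sqrt (2 * Real.pi) := by
  rw [gauss_eq, integral_gaussian, show Real.pi / (1/2) = 2 * Real.pi by ring]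

lemma sqrt2pi_pos : 0 < Real.sqrt (2 * Real.pi) :=
  Real.sqrt_pos.2 (by positivity)

lemma sqrt2pi_le_three : Real.sqrt (2 * Real.pi) ≤ 3 := by
  nlinarith [Real.sq_sqrt (by positivity : (0:ℝ) ≤ 2 * Real.pi), Real.sqrt_nonneg (2 * Real.pi),
    Real.pi_lt_d2]

lemma two_le_sqrt2pi : 2 ≤ Real.sqrt (2 * Real.pi) := by
  nlinarith [Real.sq_sqrt (by positivity : (0:ℝ) ≤ 2 * Real.pi), Real.sqrt_nonneg (2 * Real.pi),
    Real.pi_gt_three]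

lemma stdN_nonneg (z : ℝ) : 0 ≤ stdN z := by
  apply mul_nonneg (by positivity)
  apply integral_nonneg; intro x; positivity

lemma stdN_le_one (z : ℝ) : stdN z ≤ 1 := by
  have h := setIntegral_le_integral (μ := volume) (s := Set.Iic z) gauss_integrable
    (Filter.Eventually.of_forall fun x => by positivity)
  rw [gauss_total] at h
  calc stdN z ≤ (Real.sqrt (2 * Real.pi))⁻¹ * Real.sqrt (2 * Real.pi) := by
        exact mul_le_mul_of_nonneg_left h (by positivity)
    _ = 1 := inv_mul_cancel₀ sqrt2pi_pos.ne'

lemma stdN_sub (a b : ℝ) : stdN b - stdN a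
    = (Real.sqrt (2 * Real.pi))⁻¹ * ∫ x in a..b, Real.exp (-x ^ 2 / 2) := by
  rw [stdN, stdN, ← mul_sub, intervalIntegral.integral_Iic_sub_Iic
    gauss_integrable.integrableOn gauss_integrable.integrableOn]

lemma stdN_mono : Monotone stdN := by
  intro a b hab
  have h : 0 ≤ stdN b - stdN a := by
    rw [stdN_sub]
    apply mul_nonneg (by positivity)
    apply intervalIntegral.integral_nonneg hab
    intro x _; positivity
  linarith

lemma stdN_sub_le (a : ℝ) (ha : 0 ≤ a) : stdN a - stdN (-a) ≤ a := by
  rw [stdN_sub]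
  have h : ‖∫ x in (-a)..a, Real.exp (-x ^ 2 / 2)‖ ≤ 1 * |a - (-a)| := by
    apply intervalIntegral.norm_integral_le_of_norm_le_const
    intro x _
    rw [Real.norm_eq_abs, abs_of_pos (Real.exp_pos _)]
    exact Real.exp_le_one_iff.2 (by nlinarith [sq_nonneg x])
  rw [Real.norm_eq_abs, abs_of_nonneg (by linarith [ha] : (0:ℝ) ≤ a - -a)] at h
  have h2 : (∫ x in (-a)..a, Real.exp (-x ^ 2 / 2)) ≤ 2 * a := le_trans (le_abs_self _) (by linarith)
  have hnn : 0 ≤ ∫ x in (-a)..a, Real.exp (-x ^ 2 / 2) :=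
    intervalIntegral.integral_nonneg (by linarith) (fun x _ => by positivity)
  have hinv : (Real.sqrt (2 * Real.pi))⁻¹ ≤ 1/2 := by
    rw [show (1:ℝ)/2 = (2:ℝ)⁻¹ by norm_num]
    exact inv_anti₀ (by norm_num) two_le_sqrt2pi
  calc (Real.sqrt (2 * Real.pi))⁻¹ * ∫ x in (-a)..a, Real.exp (-x ^ 2 / 2)
      ≤ (1/2) * (2 * a) := mul_le_mul hinv h2 hnn (by norm_num)
    _ = a := by ring

lemma stdN_sub_ge (a : ℝ) (h0 : 0 ≤ a) (h1 : a ≤ 1) : a / 3 ≤ stdN a - stdN (-a) := by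
  rw [stdN_sub]
  have key : ∀ x ∈ Set.Icc (-a) a, (1:ℝ)/2 ≤ Real.exp (-x ^ 2 / 2) := by
    intro x hx
    have hx2 : x ^ 2 ≤ 1 := by
      rw [sq_le_one_iff_abs_le_one, abs_le]
      constructor <;> nlinarith [hx.1, hx.2]
    have := Real.add_one_le_exp (-x^2/2)
    linarith
  have h2 : a ≤ ∫ x in (-a)..a, Real.exp (-x ^ 2 / 2) := by
    have := intervalIntegral.integral_mono_on (a := -a) (b := a) (by linarith)
      (intervalIntegrable_const (c := (1:ℝ)/2))
      (gauss_integrable.intervalIntegrable)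
      (fun x hx => key x hx)
    simp only [intervalIntegral.integral_const, smul_eq_mul] at this
    linarith
  have h3 : (3:ℝ)⁻¹ ≤ (Real.sqrt (2 * Real.pi))⁻¹ :=
    inv_anti₀ sqrt2pi_pos sqrt2pi_le_three
  have h4 := mul_le_mul h3 h2 h0 (by positivity)
  calc a / 3 = (3:ℝ)⁻¹ * a := by ring
    _ ≤ _ := h4

lemma stdN_eq (z : ℝ) : stdN z = (Real.sqrt (2 * Real.pi))⁻¹ *
    ((∫ x in Set.Iic (0:ℝ), Real.exp (-x ^ 2 / 2)) + ∫ x in (0:ℝ)..z, Real.exp (-x ^ 2 / 2)) := by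
  rw [stdN, ← intervalIntegral.integral_Iic_sub_Iic gauss_integrable.integrableOn
    gauss_integrable.integrableOn]
  ring

lemma hasDerivAt_stdN (x : ℝ) : HasDerivAt stdN (stdNd x) x := by
  have hcont : Continuous fun x : ℝ => Real.exp (-x ^ 2 / 2) := by continuity
  have h : HasDerivAt (fun z => ∫ u in (0:ℝ)..z, Real.exp (-u ^ 2 / 2))
      (Real.exp (-x ^ 2 / 2)) x :=
    intervalIntegral.integral_hasDerivAt_right
      (gauss_integrable.intervalIntegrable) (hcont.stronglyMeasurableAtFilter _ _)
      hcont.continuousAt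
  have h2 := ((h.const_add (∫ u in Set.Iic (0:ℝ), Real.exp (-u ^ 2 / 2))).const_mul
    ((Real.sqrt (2 * Real.pi))⁻¹))
  have : stdN = fun z => (Real.sqrt (2 * Real.pi))⁻¹ *
      ((∫ u in Set.Iic (0:ℝ), Real.exp (-u ^ 2 / 2)) + ∫ u in (0:ℝ)..z, Real.exp (-u ^ 2 / 2)) :=
    funext stdN_eq
  rw [this, stdNd]
  exact h2

lemma continuous_stdN : Continuous stdN :=
  Differentiable.continuous (fun x => (hasDerivAt_stdN x).differentiableAt)

lemma bs_hasDerivAt (s : ℝ) (hs : 0 < s) (x : ℝ) :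
    HasDerivAt (fun c => Real.exp c * stdN (c/s + s/2) - stdN (c/s - s/2))
      (Real.exp x * stdN (x/s + s/2)) x := by
  have h1 : HasDerivAt (fun x : ℝ => x/s + s/2) (1/s) x := by
    simpa using ((hasDerivAt_id x).div_const s).add_const (s/2)
  have h1' : HasDerivAt (fun x : ℝ => x/s - s/2) (1/s) x := by
    simpa using ((hasDerivAt_id x).div_const s).sub_const (s/2)
  have h2 : HasDerivAt (fun x => stdN (x/s + s/2)) (stdNd (x/s + s/2) * (1/s)) x :=
    (hasDerivAt_stdN _).comp x h1
  have h3 : HasDerivAt (fun x => stdN (x/s - s/2)) (stdNd (x/s - s/2) * (1/s)) x :=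
    (hasDerivAt_stdN _).comp x h1'
  have h4 := (Real.hasDerivAt_exp x).mul h2
  have key : Real.exp x * stdNd (x/s + s/2) = stdNd (x/s - s/2) := by
    unfold stdNd
    rw [mul_left_comm, ← Real.exp_add]
    congr 2
    field_simp
    ring
  have heq : Real.exp x * stdN (x/s + s/2) =
      (Real.exp x * stdN (x/s + s/2) + Real.exp x * (stdNd (x/s + s/2) * (1/s)))
        - stdNd (x/s - s/2) * (1/s) := by
    rw [← key]; ring
  rw [heq]
  exact h4.sub h3

lemma bs_bound (s c : ℝ) (hs : 0 < s) :
    Real.exp c * stdN (c/s + s/2) - stdN (c/s - s/2) ≤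
      (stdN (s/2) - stdN (-(s/2))) + max (Real.exp c - 1) 0 := by
  set g : ℝ → ℝ := fun c => Real.exp c * stdN (c/s + s/2) - stdN (c/s - s/2) with hgdef
  have hg0 : g 0 = stdN (s/2) - stdN (-(s/2)) := by
    simp [hgdef, zero_div, neg_div]
  have hgmono : Monotone g := by
    apply monotone_of_deriv_nonneg
    · exact fun x => (bs_hasDerivAt s hs x).differentiableAt
    · intro x
      rw [(bs_hasDerivAt s hs x).deriv]
      exact mul_nonneg (Real.exp_pos x).le (stdN_nonneg _)
  rcases le_or_gt c 0 with hc | hc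
  · have := hgmono hc
    rw [hg0] at this
    have : g c ≤ stdN (s/2) - stdN (-(s/2)) := this
    linarith [le_max_right (Real.exp c - 1) (0:ℝ)]
  · have hanti : Antitone (fun x => g x - Real.exp x) := by
      apply antitone_of_deriv_nonpos
      · exact fun x => ((bs_hasDerivAt s hs x).sub (Real.hasDerivAt_exp x)).differentiableAt
      · intro x
        rw [HasDerivAt.deriv (f := fun x => g x - Real.exp x)
          ((bs_hasDerivAt s hs x).sub (Real.hasDerivAt_exp x))]
        have := stdN_le_one (x/s + s/2)
        nlinarith [(Real.exp_pos x).le, Real.exp_pos x]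
    have h5 := hanti hc.le
    simp only [Real.exp_zero, hg0] at h5
    have h6 : Real.exp c - 1 ≤ max (Real.exp c - 1) 0 := le_max_left _ _
    linarith

end AuxGauss

lemma rpow_one_add_le {α : ℝ} (y : ℝ) (hy : 0 ≤ y) (h0 : 0 ≤ α) (h1 : α ≤ 1) :
    (1 + y) ^ α ≤ 1 + y ^ α := by
  have h := NNReal.rpow_add_le_add_rpow (1 : ℝ≥0) y.toNNReal h0 h1
  have h' := NNReal.coe_le_coe.2 h
  push_cast [NNReal.coe_rpow, Real.coe_toNNReal y hy] at h'
  simpa using h'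

section Laplace
variable {α kbar β t u : ℝ} (hα : 0 < α) (hα1 : α < 1) (hk : 0 < kbar) (ht : 0 < t) (hu : 0 ≤ u)
include hα hα1 hk ht hu

lemma y_nonneg : 0 ≤ u * (kbar * t ^ β) / ((1 - α) * t) := by
  have h1 : (0:ℝ) < t ^ β := Real.rpow_pos_of_pos ht β
  have h2 : (0:ℝ) < 1 - α := by linarith
  positivity

lemma neg_log_L_nonneg : 0 ≤ -Real.log (ATSLaplace α kbar β t u) := by
  rw [ATSLaplace, Real.log_exp]
  set y := u * (kbar * t ^ β) / ((1 - α) * t) with hy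
  have hy0 : 0 ≤ y := y_nonneg hα hα1 hk ht hu
  have h1 : (1:ℝ) ≤ (1 + y) ^ α :=
    calc (1:ℝ) = 1 ^ α := (Real.one_rpow α).symm
      _ ≤ (1 + y) ^ α := Real.rpow_le_rpow zero_le_one (by linarith) hα.le
  have h2 : (0:ℝ) < t ^ β := Real.rpow_pos_of_pos ht β
  have h3 : 0 ≤ t / (kbar * t ^ β) := by positivity
  have h4 : 0 ≤ (1 - α) / α := div_nonneg (by linarith) hα.le
  have : -(t / (kbar * t ^ β) * ((1 - α) / α) * (1 - (1 + y) ^ α)) =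
      (t / (kbar * t ^ β) * ((1 - α) / α)) * ((1 + y) ^ α - 1) := by ring
  rw [this]
  exact mul_nonneg (mul_nonneg h3 h4) (by linarith)

lemma neg_log_L_le_lin : -Real.log (ATSLaplace α kbar β t u) ≤ u := by
  rw [ATSLaplace, Real.log_exp]
  set y := u * (kbar * t ^ β) / ((1 - α) * t) with hy
  have hy0 : 0 ≤ y := y_nonneg hα hα1 hk ht hu
  have hber : (1 + y) ^ α ≤ 1 + α * y :=
    rpow_one_add_le_one_add_mul_self (by linarith) hα.le hα1.le
  have h2 : (0:ℝ) < t ^ β := Real.rpow_pos_of_pos ht β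
  have h3 : 0 ≤ t / (kbar * t ^ β) := by positivity
  have key : (t / (kbar * t ^ β)) * ((1 - α) / α) * (α * y) = u := by
    rw [hy]
    have h5 : t ^ β ≠ 0 := h2.ne'
    have h6 : (1 - α) ≠ 0 := by intro h; rw [sub_eq_zero] at h; linarith
    field_simp
  have h4 : 0 ≤ (1 - α) / α := div_nonneg (by linarith) hα.le
  calc -(t / (kbar * t ^ β) * ((1 - α) / α) * (1 - (1 + y) ^ α))
      = (t / (kbar * t ^ β) * ((1 - α) / α)) * ((1 + y) ^ α - 1) := by ring
    _ ≤ (t / (kbar * t ^ β) * ((1 - α) / α)) * (α * y) := by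
        apply mul_le_mul_of_nonneg_left _ (mul_nonneg h3 h4)
        linarith
    _ = u := key

lemma one_sub_L_le : 1 - ATSLaplace α kbar β t u ≤ -Real.log (ATSLaplace α kbar β t u) := by
  have h := Real.add_one_le_exp ((t / (kbar * t ^ β)) * ((1 - α) / α) *
    (1 - (1 + u * (kbar * t ^ β) / ((1 - α) * t)) ^ α))
  rw [ATSLaplace, Real.log_exp]
  linarith

lemma neg_log_L_le_pow : -Real.log (ATSLaplace α kbar β t u) ≤
    (t / (kbar * t ^ β)) * ((1 - α) / α) * (u * (kbar * t ^ β) / ((1 - α) * t)) ^ α := by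
  rw [ATSLaplace, Real.log_exp]
  set y := u * (kbar * t ^ β) / ((1 - α) * t) with hy
  have hy0 : 0 ≤ y := y_nonneg hα hα1 hk ht hu
  have hsub : (1 + y) ^ α ≤ 1 + y ^ α := rpow_one_add_le y hy0 hα.le hα1.le
  have h2 : (0:ℝ) < t ^ β := Real.rpow_pos_of_pos ht β
  have h3 : 0 ≤ t / (kbar * t ^ β) := by positivity
  have h4 : 0 ≤ (1 - α) / α := div_nonneg (by linarith) hα.le
  calc -(t / (kbar * t ^ β) * ((1 - α) / α) * (1 - (1 + y) ^ α))
      = (t / (kbar * t ^ β) * ((1 - α) / α)) * ((1 + y) ^ α - 1) := by ring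
    _ ≤ (t / (kbar * t ^ β) * ((1 - α) / α)) * (y ^ α) := by
        apply mul_le_mul_of_nonneg_left _ (mul_nonneg h3 h4)
        linarith
    _ = _ := by rw [hy]

end Laplace

lemma pointwise_bound (σbar E q t z : ℝ) (hσ : 0 < σbar) (hE : 0 ≤ E) (ht : 0 < t)
    (hz : 0 ≤ z) (hq : 0 ≤ q * t) :
    Real.exp (q * t - t * σbar ^ 2 * E * z) *
        stdN ((-(σbar * E) * Real.sqrt (z * t) + q * Real.sqrt t / (σbar * Real.sqrt z))
          + σbar * Real.sqrt (z * t) / 2) -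
      stdN ((-(σbar * E) * Real.sqrt (z * t) + q * Real.sqrt t / (σbar * Real.sqrt z))
          - σbar * Real.sqrt (z * t) / 2)
    ≤ (stdN (σbar * Real.sqrt (z * t) / 2) - stdN (-(σbar * Real.sqrt (z * t) / 2)))
      + (Real.exp (q * t) - 1) := by
  have hexp1 : (1:ℝ) ≤ Real.exp (q * t) := Real.one_le_exp_iff.2 hq
  rcases eq_or_lt_of_le hz with hz0 | hz0
  · -- z = 0
    subst_vars
    simp only [zero_mul, Real.sqrt_zero, mul_zero, div_zero, add_zero, sub_zero,
      neg_zero, zero_div, mul_zero, zero_add]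
    nlinarith [stdN_le_one (0:ℝ), stdN_nonneg (0:ℝ), hexp1]
  · -- z > 0
    set s := σbar * Real.sqrt (z * t) with hs
    have hsq : 0 < Real.sqrt (z * t) := Real.sqrt_pos.2 (by positivity)
    have hspos : 0 < s := by positivity
    set c := q * t - t * σbar ^ 2 * E * z with hc
    have hl : -(σbar * E) * Real.sqrt (z * t) + q * Real.sqrt t / (σbar * Real.sqrt z)
        = c / s := by
      rw [hs, hc, Real.sqrt_mul hz]
      have ha : 0 < Real.sqrt z := Real.sqrt_pos.2 hz0
      have hb : 0 < Real.sqrt t := Real.sqrt_pos.2 ht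
      have haz : Real.sqrt z * Real.sqrt z = z := Real.mul_self_sqrt hz
      have hbt : Real.sqrt t * Real.sqrt t = t := Real.mul_self_sqrt ht.le
      have key : ∀ a b : ℝ, 0 < a → 0 < b →
          -(σbar * E) * (a * b) + q * b / (σbar * a)
            = (q * (b * b) - (b * b) * σbar ^ 2 * E * (a * a)) / (σbar * (a * b)) := by
        intro a b ha' hb'
        field_simp
        ring
      have h9 := key (Real.sqrt z) (Real.sqrt t) ha hb
      rw [haz, hbt] at h9
      rw [h9]
    rw [hl]
    have hmax : max (Real.exp c - 1) 0 ≤ Real.exp (q * t) - 1 := by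
      apply max_le _ (by linarith)
      have : c ≤ q * t := by
        rw [hc]
        have h8 : 0 ≤ t * σbar ^ 2 * E * z := by positivity
        linarith
      have := Real.exp_le_exp.2 this
      linarith
    have := bs_bound s c hspos
    linarith

section Measureish
variable {ν : Measure ℝ} [IsProbabilityMeasure ν]

lemma ae_nonneg_of_supp (hsupp : ν (Set.Iio 0) = 0) : ∀ᵐ x ∂ν, 0 ≤ x := by
  rw [ae_iff]
  convert hsupp using 2
  ext x
  simp [not_le, Set.mem_Iio]

lemma exp_neg_integrable (hsupp : ν (Set.Iio 0) = 0) {u : ℝ} (hu : 0 ≤ u) :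
    Integrable (fun x => Real.exp (-u * x)) ν := by
  apply Integrable.mono' (integrable_const (1:ℝ))
  · exact (Real.continuous_exp.comp (continuous_const.mul continuous_id)).aestronglyMeasurable
  · filter_upwards [ae_nonneg_of_supp hsupp] with x hx
    rw [Real.norm_eq_abs, abs_of_pos (Real.exp_pos _)]
    exact Real.exp_le_one_iff.2 (by nlinarith)

lemma one_sub_exp_concave {l y : ℝ} (h0 : 0 ≤ l) (h1 : l ≤ 1) :
    l * (1 - Real.exp (-y)) ≤ 1 - Real.exp (-(l * y)) := by
  have hcx := convexOn_exp.2 (Set.mem_univ (-y)) (Set.mem_univ (0:ℝ)) h0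
    (show (0:ℝ) ≤ 1 - l by linarith) (by ring)
  simp only [smul_eq_mul, mul_zero, add_zero, Real.exp_zero, mul_one] at hcx
  have h2 : -(l * y) = l * -y := by ring
  rw [h2]
  linarith

lemma self_mul_exp_le (s : ℝ) : s * Real.exp (-s) ≤ 1 - Real.exp (-s) := by
  have h := Real.add_one_le_exp s
  have h2 := Real.exp_pos (-s)
  have h3 : (s + 1) * Real.exp (-s) ≤ Real.exp s * Real.exp (-s) :=
    mul_le_mul_of_nonneg_right h h2.le
  rw [← Real.exp_add] at h3
  simp at h3
  linarith

lemma one_sub_exp_le (s : ℝ) : 1 - Real.exp (-s) ≤ s := by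
  have h := Real.add_one_le_exp (-s)
  linarith

lemma moment_bound (hsupp : ν (Set.Iio 0) = 0)
    (R : ℝ → ℝ) (hlapval : ∀ u ≥ 0, (∫ x, Real.exp (-u * x) ∂ν) = R u)
    (hR : ∀ u ≥ 0, 1 - R u ≤ u) :
    Integrable (fun x : ℝ => x) ν ∧ (∫ x, x ∂ν) ≤ 1 := by
  set g : ℕ → ℝ → ℝ := fun n x => (n+1 : ℝ) * (1 - Real.exp (-(1/(n+1)) * x)) with hgdef
  set f : ℕ → ℝ → ℝ≥0∞ := fun n x => ENNReal.ofReal (g n x) with hf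
  have hae : ∀ᵐ x ∂ν, 0 ≤ x := ae_nonneg_of_supp hsupp
  have hgle : ∀ (n : ℕ) (x : ℝ), 0 ≤ x → g n x ≤ x := by
    intro n x hx
    have hn : (0:ℝ) < n + 1 := by positivity
    have hs := one_sub_exp_le ((1/(n+1:ℝ)) * x)
    calc g n x = (n+1 : ℝ) * (1 - Real.exp (-((1/(n+1)) * x))) := by
          simp only [hgdef]; ring_nf
      _ ≤ (n+1 : ℝ) * ((1/(n+1)) * x) := mul_le_mul_of_nonneg_left hs hn.le
      _ = x := by field_simp
  have hgn : ∀ (n : ℕ) (x : ℝ), 0 ≤ x → 0 ≤ g n x := by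
    intro n x hx
    have hn : (0:ℝ) < n + 1 := by positivity
    apply mul_nonneg hn.le
    have hxx : (0:ℝ) ≤ (1/(n+1:ℝ)) * x := by positivity
    have : Real.exp (-(1/(n+1)) * x) ≤ 1 := Real.exp_le_one_iff.2 (by linarith)
    linarith
  have hmono : Monotone f := by
    intro n m hnm x
    rcases le_or_gt 0 x with hx | hx
    · apply ENNReal.ofReal_le_ofReal
      have hn : (0:ℝ) < n + 1 := by positivity
      have hm : (0:ℝ) < m + 1 := by positivity
      have hl0 : (0:ℝ) ≤ (n+1)/(m+1) := by positivity
      have hl1 : ((n+1:ℝ))/(m+1) ≤ 1 := by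
        rw [div_le_one hm]
        have : (n:ℝ) ≤ m := Nat.cast_le.2 hnm
        linarith
      have hcc2 := one_sub_exp_concave (l := (n+1)/(m+1)) (y := (1/(n+1)) * x) hl0 hl1
      have hly : ((n+1:ℝ))/(m+1) * ((1/(n+1)) * x) = (1/(m+1)) * x := by
        field_simp
      rw [hly] at hcc2
      have h5 := mul_le_mul_of_nonneg_left hcc2 hm.le
      calc g n x = (m+1 : ℝ) * (((n+1:ℝ))/(m+1) * (1 - Real.exp (-((1/(n+1)) * x)))) := by
            simp only [hgdef]
            rw [show -(1/(n+1:ℝ)) * x = -((1/(n+1:ℝ)) * x) by ring]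
            field_simp
        _ ≤ (m+1 : ℝ) * (1 - Real.exp (-((1/(m+1)) * x))) := h5
        _ = g m x := by
            simp only [hgdef]
            rw [show -(1/(m+1:ℝ)) * x = -((1/(m+1:ℝ)) * x) by ring]
    · have hneg : ∀ k : ℕ, g k x ≤ 0 := by
        intro k
        have hk : (0:ℝ) < k + 1 := by positivity
        apply mul_nonpos_of_nonneg_of_nonpos hk.le
        have h1 : (0:ℝ) ≤ -(1/(k+1)) * x := by
          have : (0:ℝ) < 1/(k+1:ℝ) := by positivity
          nlinarith
        have : (1:ℝ) ≤ Real.exp (-(1/(k+1)) * x) := by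
          rw [Real.one_le_exp_iff]
          exact h1
        linarith
      have : f n x = 0 := by
        simp only [hf, ENNReal.ofReal_eq_zero]
        exact hneg n
      rw [this]
      exact zero_le
  have hsup : ∀ x : ℝ, 0 ≤ x → (⨆ n, f n x) = ENNReal.ofReal x := by
    intro x hx
    have htend : Tendsto (fun n : ℕ => f n x) atTop (𝓝 (ENNReal.ofReal x)) := by
      apply ENNReal.tendsto_ofReal
      -- g n x → x by squeeze
      have hlow : ∀ n : ℕ, x * Real.exp (-(1/(n+1)) * x) ≤ g n x := by
        intro n
        have hn : (0:ℝ) < n + 1 := by positivity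
        have h6 := self_mul_exp_le ((1/(n+1:ℝ)) * x)
        have h7 := mul_le_mul_of_nonneg_left h6 hn.le
        have heq : (n+1:ℝ) * ((1/(n+1)) * x * Real.exp (-((1/(n+1)) * x)))
            = x * Real.exp (-((1/(n+1)) * x)) := by
          field_simp
        rw [heq] at h7
        calc x * Real.exp (-(1/(n+1)) * x) = x * Real.exp (-((1/(n+1)) * x)) := by ring_nf
          _ ≤ (n+1:ℝ) * (1 - Real.exp (-((1/(n+1)) * x))) := h7
          _ = g n x := by simp only [hgdef]; ring_nf
      have hlim : Tendsto (fun n : ℕ => x * Real.exp (-(1/(n+1)) * x)) atTop (𝓝 x) := by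
        have h8 : Tendsto (fun n : ℕ => -(1/((n:ℝ)+1)) * x) atTop (𝓝 0) := by
          have := tendsto_one_div_add_atTop_nhds_zero_nat (𝕜 := ℝ)
          have h9 : Tendsto (fun n : ℕ => (1:ℝ)/((n:ℝ)+1)) atTop (𝓝 0) := by
            simpa using this
          have := (h9.neg).mul_const x
          simpa using this
        have h10 := (Real.continuous_exp.continuousAt (x := (0:ℝ))).tendsto.comp h8
        rw [Real.exp_zero] at h10
        have := h10.const_mul x
        simpa using this
      exact tendsto_of_tendsto_of_tendsto_of_le_of_le hlim tendsto_const_nhds hlow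
        (fun n => hgle n x hx)
    have hmono' : Monotone (fun n => f n x) := fun n m h => hmono h x
    have := tendsto_atTop_iSup hmono'
    exact tendsto_nhds_unique this htend
  -- lintegral bound
  have hgmeas : ∀ n, Measurable (g n) := by
    intro n
    simp only [hgdef]
    exact ((((measurable_id.const_mul (-(1/(n+1:ℝ)))).exp).const_sub 1).const_mul _)
  have hfmeas : ∀ n, Measurable (f n) := fun n => ENNReal.measurable_ofReal.comp (hgmeas n)
  have hlint : (∫⁻ x, ENNReal.ofReal x ∂ν) ≤ 1 := by
    have hcongr : (∫⁻ x, ENNReal.ofReal x ∂ν) = ∫⁻ x, ⨆ n, f n x ∂ν := by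
      apply lintegral_congr_ae
      filter_upwards [hae] with x hx
      exact (hsup x hx).symm
    rw [hcongr, lintegral_iSup hfmeas hmono]
    apply iSup_le
    intro n
    have hint : Integrable (g n) ν := by
      have h1 := exp_neg_integrable hsupp (u := 1/(n+1:ℝ)) (by positivity)
      have : g n = fun x => (n+1:ℝ) * (1 - Real.exp (-(1/(n+1)) * x)) := rfl
      rw [this]
      exact (((integrable_const (1:ℝ)).sub h1).const_mul _)
    have hval : (∫ x, g n x ∂ν) ≤ 1 := by
      have h2 : (∫ x, g n x ∂ν) = (n+1:ℝ) * (1 - R (1/(n+1))) := by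
        simp only [hgdef]
        rw [integral_const_mul,
          integral_sub (integrable_const 1) (exp_neg_integrable hsupp (by positivity)),
          integral_const, hlapval (1/(n+1:ℝ)) (by positivity)]
        simp
      rw [h2]
      have h3 := hR (1/(n+1:ℝ)) (by positivity)
      have hn : (0:ℝ) < n + 1 := by positivity
      calc (n+1:ℝ) * (1 - R (1/(n+1))) ≤ (n+1:ℝ) * (1/(n+1)) :=
            mul_le_mul_of_nonneg_left h3 hn.le
        _ = 1 := by field_simp
    have h4 : (∫⁻ x, f n x ∂ν) = ENNReal.ofReal (∫ x, g n x ∂ν) := by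
      rw [← ofReal_integral_eq_lintegral_ofReal hint]
      filter_upwards [hae] with x hx
      exact hgn n x hx
    rw [h4]
    calc ENNReal.ofReal (∫ x, g n x ∂ν) ≤ ENNReal.ofReal 1 := ENNReal.ofReal_le_ofReal hval
      _ = 1 := ENNReal.ofReal_one
  have hint_id : Integrable (fun x : ℝ => x) ν := by
    constructor
    · exact aestronglyMeasurable_id
    · rw [hasFiniteIntegral_iff_norm]
      have : (∫⁻ x, ENNReal.ofReal ‖x‖ ∂ν) = ∫⁻ x, ENNReal.ofReal x ∂ν := by
        apply lintegral_congr_ae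
        filter_upwards [hae] with x hx
        rw [Real.norm_eq_abs, abs_of_nonneg hx]
      rw [this]
      exact lt_of_le_of_lt hlint ENNReal.one_lt_top
  refine ⟨hint_id, ?_⟩
  rw [integral_eq_lintegral_of_nonneg_ae hae hint_id.aestronglyMeasurable]
  calc (∫⁻ x, ENNReal.ofReal x ∂ν).toReal ≤ (1:ℝ≥0∞).toReal :=
        ENNReal.toReal_mono (by simp) hlint
    _ = 1 := by simp

end Measureish


section TailM
variable {ν : Measure ℝ} [IsProbabilityMeasure ν]
lemma tail_bound (hsupp : ν (Set.Iio 0) = 0) {c L : ℝ} (hc : 0 < c)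
    (hL : (∫ x, Real.exp (-(1/c) * x) ∂ν) = L) :
    (ν {x | c < x}).toReal ≤ 2 * (1 - L) := by
  set f : ℝ → ℝ := fun x => 1 - Real.exp (-(1/c) * x) with hfdef
  have hba : ∀ᵐ x ∂ν, 0 ≤ f x := by
    filter_upwards [ae_nonneg_of_supp hsupp] with x hx
    simp only [hfdef, sub_nonneg]
    apply Real.exp_le_one_iff.2
    have : (0:ℝ) ≤ (1/c) * x := by positivity
    linarith
  have hint : Integrable f ν := (integrable_const 1).sub (exp_neg_integrable hsupp (by positivity))
  have hi : (∫ x, f x ∂ν) = 1 - L := by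
    simp only [hfdef]
    rw [integral_sub (integrable_const 1) (exp_neg_integrable hsupp (by positivity)),
      integral_const, hL]
    simp
  set ε : ℝ := 1 - Real.exp (-1) with hε
  have hmar := mul_meas_ge_le_integral_of_nonneg hba hint ε
  rw [hi] at hmar
  rw [measureReal_def] at hmar
  have hsub : {x : ℝ | c < x} ⊆ {x | ε ≤ f x} := by
    intro x hx
    have hx' : c < x := hx
    have h1 : (1:ℝ) ≤ 1/c * x := by
      rw [show (1:ℝ)/c*x = x/c by ring, le_div_iff₀ hc]; linarith
    have h2 : Real.exp (-(1/c) * x) ≤ Real.exp (-1) := Real.exp_le_exp.2 (by linarith)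
    show (1:ℝ) - Real.exp (-1) ≤ 1 - Real.exp (-(1/c) * x)
    linarith
  have hmeaset : (ν {x | c < x}).toReal ≤ (ν {x | ε ≤ f x}).toReal := by
    apply ENNReal.toReal_mono (measure_ne_top ν _)
    exact measure_mono hsub
  have hεhalf : (1:ℝ)/2 ≤ ε := by
    have h3 : Real.exp (-1) ≤ 1/2 := by
      rw [Real.exp_neg]
      rw [inv_le_comm₀ (Real.exp_pos 1) (by norm_num)]
      have := Real.add_one_le_exp (1:ℝ)
      linarith
    simp only [hε]
    linarith
  have hnn : 0 ≤ (ν {x | ε ≤ f x}).toReal := ENNReal.toReal_nonneg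
  nlinarith [hmar, hmeaset, hεhalf, hnn]
end TailM

lemma eventually_rpow_le {r B : ℝ} (hr : 0 < r) (hB : 0 < B) :
    ∀ᶠ t in 𝓝[>] (0:ℝ), t ^ r ≤ B := by
  have hc : ContinuousAt (fun t : ℝ => t ^ r) 0 :=
    Real.continuousAt_rpow_const 0 r (Or.inr hr.le)
  have h1 : Tendsto (fun t : ℝ => t ^ r) (𝓝[>] 0) (𝓝 0) := by
    have := hc.tendsto
    rw [Real.zero_rpow hr.ne'] at this
    exact this.mono_left nhdsWithin_le_nhds
  filter_upwards [h1 (Iio_mem_nhds hB)] with t ht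
  exact le_of_lt ht

lemma tail_expr_eq {α kbar β t u0 : ℝ} (hα0 : 0 < α) (hα1 : α < 1) (hk : 0 < kbar)
    (ht : 0 < t) (hu0 : 0 < u0) :
    (t / (kbar * t ^ β)) * ((1 - α) / α) * (u0 * (kbar * t ^ β) / ((1 - α) * t)) ^ α
      = (((1 - α) / α) * (1 / kbar) * (u0 * kbar / (1 - α)) ^ α) * t ^ ((1 - β) * (1 - α)) := by
  have h1 : (0:ℝ) < 1 - α := by linarith
  have h2 : (0:ℝ) < t ^ β := Real.rpow_pos_of_pos ht β
  have e1 : t / (kbar * t ^ β) = (1 / kbar) * t ^ ((1:ℝ) - β) := by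
    rw [Real.rpow_sub ht, Real.rpow_one]
    field_simp
  have e2 : u0 * (kbar * t ^ β) / ((1 - α) * t) = (u0 * kbar / (1 - α)) * t ^ (β - (1:ℝ)) := by
    rw [Real.rpow_sub ht, Real.rpow_one]
    field_simp
  have e3 : ((u0 * kbar / (1 - α)) * t ^ (β - (1:ℝ))) ^ α
      = (u0 * kbar / (1 - α)) ^ α * (t ^ (β - (1:ℝ))) ^ α := by
    apply Real.mul_rpow (by positivity) (Real.rpow_pos_of_pos ht _).le
  have e4 : (t ^ (β - (1:ℝ))) ^ α = t ^ ((β - 1) * α) := by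
    rw [← Real.rpow_mul ht.le]
  have e5 : t ^ ((1:ℝ) - β) * t ^ ((β - 1) * α) = t ^ ((1 - β) * (1 - α)) := by
    rw [← Real.rpow_add ht]
    ring_nf
  rw [e1, e2, e3, e4]
  calc (1 / kbar) * t ^ ((1:ℝ) - β) * ((1 - α) / α) *
        ((u0 * kbar / (1 - α)) ^ α * t ^ ((β - 1) * α))
      = (((1 - α) / α) * (1 / kbar) * (u0 * kbar / (1 - α)) ^ α) *
          (t ^ ((1:ℝ) - β) * t ^ ((β - 1) * α)) := by ring
    _ = _ := by rw [e5]


set_option maxHeartbeats 1000000 in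
lemma call_bound (α kbar σbar ηbar β δ t co A : ℝ) (ν : Measure ℝ) [IsProbabilityMeasure ν]
    (hα0 : 0 < α) (hα1 : α < 1) (hk : 0 < kbar) (hσ : 0 < σbar) (hη : 0 < ηbar)
    (ht : 0 < t) (hco : 0 < co) (hA : 0 < A)
    (hsupp' : ν (Set.Iio 0) = 0)
    (hlapt : ∀ u ≥ 0, (∫ x, Real.exp (-u * x) ∂ν) = ATSLaplace α kbar β t u) :
    ATSCall α kbar σbar ηbar β δ ν t ≤
      (σbar * Real.sqrt t / 2) * (Real.sqrt co + A * (ν {x | co < x}).toReal + 1/A)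
      + (Real.exp (ATSphi α kbar σbar ηbar β δ t * t) - 1) := by
  have htδ : (0:ℝ) < t ^ δ := Real.rpow_pos_of_pos ht δ
  set u0 : ℝ := t * σbar^2 * (ηbar * t ^ δ) with hu0def
  have hu0 : 0 < u0 := by positivity
  set q : ℝ := ATSphi α kbar σbar ηbar β δ t with hqdef
  have hpL : q * t = -Real.log (ATSLaplace α kbar β t u0) := by
    rw [hqdef, ATSphi, div_mul_cancel₀ _ ht.ne']
  have hp0 : 0 ≤ q * t := by
    rw [hpL]; exact neg_log_L_nonneg hα0 hα1 hk ht hu0.le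
  have hae0 : ∀ᵐ z ∂ν, 0 ≤ z := ae_nonneg_of_supp hsupp'
  obtain ⟨hid_int, hid_le⟩ := moment_bound hsupp' (ATSLaplace α kbar β t) hlapt
    (fun u hu => by
      have h2 := one_sub_L_le (β := β) hα0 hα1 hk ht hu
      have h3 := neg_log_L_le_lin (β := β) hα0 hα1 hk ht hu
      linarith)
  set G : ℝ → ℝ := fun z =>
    stdN (σbar * Real.sqrt (z * t) / 2) - stdN (-(σbar * Real.sqrt (z * t) / 2)) with hGdef
  set I : ℝ → ℝ := fun z =>
    Real.exp (q * t - t * σbar ^ 2 * (ηbar * t ^ δ) * z) *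
      stdN (ATSl α kbar σbar ηbar β δ t z + σbar * Real.sqrt (z * t) / 2) -
      stdN (ATSl α kbar σbar ηbar β δ t z - σbar * Real.sqrt (z * t) / 2) with hIdef
  have hcall_eq : ATSCall α kbar σbar ηbar β δ ν t = ∫ z, I z ∂ν := rfl
  -- measurability
  have hm1 : Measurable fun z : ℝ => Real.sqrt (z * t) :=
    Real.continuous_sqrt.measurable.comp (measurable_id.mul_const t)
  have hGmeas : Measurable G := by
    apply Measurable.sub
    · exact continuous_stdN.measurable.comp ((hm1.const_mul σbar).div_const 2)
    · exact continuous_stdN.measurable.comp ((hm1.const_mul σbar).div_const 2).neg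
  have hGint : Integrable G ν := by
    apply Integrable.mono' (integrable_const (1:ℝ)) hGmeas.aestronglyMeasurable
    apply Filter.Eventually.of_forall
    intro z
    have h1 := stdN_le_one (σbar * Real.sqrt (z*t) / 2)
    have h2 := stdN_nonneg (-(σbar * Real.sqrt (z*t) / 2))
    have h3 := stdN_nonneg (σbar * Real.sqrt (z*t) / 2)
    have h4 := stdN_le_one (-(σbar * Real.sqrt (z*t) / 2))
    rw [Real.norm_eq_abs, abs_le]
    constructor
    · simp only [hGdef]; linarith
    · simp only [hGdef]; linarith
  have hlmeas : Measurable fun z : ℝ => ATSl α kbar σbar ηbar β δ t z := by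
    simp only [ATSl]
    apply Measurable.add
    · exact hm1.const_mul _
    · exact Measurable.div measurable_const (Real.continuous_sqrt.measurable.const_mul σbar)
  have hImeas : Measurable I := by
    apply Measurable.sub
    · apply Measurable.mul
      · exact ((measurable_id.const_mul (t * σbar ^ 2 * (ηbar * t ^ δ))).const_sub (q*t)).exp
      · exact continuous_stdN.measurable.comp
          (hlmeas.add ((hm1.const_mul σbar).div_const 2))
    · exact continuous_stdN.measurable.comp
        (hlmeas.sub ((hm1.const_mul σbar).div_const 2))
  have hIint : Integrable I ν := by
    apply Integrable.mono' (integrable_const (Real.exp (q*t) + 1)) hImeas.aestronglyMeasurable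
    filter_upwards [hae0] with z hz
    have he1 : Real.exp (q * t - t * σbar ^ 2 * (ηbar * t ^ δ) * z) ≤ Real.exp (q*t) := by
      apply Real.exp_le_exp.2
      have h8 : 0 ≤ t * σbar ^ 2 * (ηbar * t ^ δ) * z := by positivity
      linarith
    have he2 : (0:ℝ) < Real.exp (q * t - t * σbar ^ 2 * (ηbar * t ^ δ) * z) := Real.exp_pos _
    have hn1 := stdN_le_one (ATSl α kbar σbar ηbar β δ t z + σbar * Real.sqrt (z * t) / 2)
    have hn2 := stdN_nonneg (ATSl α kbar σbar ηbar β δ t z + σbar * Real.sqrt (z * t) / 2)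
    have hn3 := stdN_le_one (ATSl α kbar σbar ηbar β δ t z - σbar * Real.sqrt (z * t) / 2)
    have hn4 := stdN_nonneg (ATSl α kbar σbar ηbar β δ t z - σbar * Real.sqrt (z * t) / 2)
    have hup : Real.exp (q * t - t * σbar ^ 2 * (ηbar * t ^ δ) * z) *
        stdN (ATSl α kbar σbar ηbar β δ t z + σbar * Real.sqrt (z * t) / 2) ≤
        Real.exp (q * t - t * σbar ^ 2 * (ηbar * t ^ δ) * z) :=
      mul_le_of_le_one_right he2.le hn1
    have hlo : 0 ≤ Real.exp (q * t - t * σbar ^ 2 * (ηbar * t ^ δ) * z) *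
        stdN (ATSl α kbar σbar ηbar β δ t z + σbar * Real.sqrt (z * t) / 2) :=
      mul_nonneg he2.le hn2
    rw [Real.norm_eq_abs, abs_le]
    constructor
    · simp only [hIdef]; linarith
    · simp only [hIdef]; linarith
  -- step 1
  have hstep1 : (∫ z, I z ∂ν) ≤ (∫ z, G z ∂ν) + (Real.exp (q*t) - 1) := by
    have hmono := integral_mono_ae hIint (hGint.add (integrable_const (Real.exp (q*t) - 1)))
      (by
        filter_upwards [hae0] with z hz
        have hb := pointwise_bound σbar (ηbar * t ^ δ) q t z hσ (by positivity) ht hz hp0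
        simp only [hIdef, hGdef]
        exact hb)
    have heq : (∫ z, G z + (Real.exp (q*t) - 1) ∂ν) = (∫ z, G z ∂ν) + (Real.exp (q*t) - 1) := by
      rw [integral_add hGint (integrable_const _), integral_const]
      simp
    rw [← heq]
    exact hmono
  -- step 2
  have hstep2 : (∫ z, G z ∂ν) ≤
      (σbar * Real.sqrt t / 2) * (Real.sqrt co + A * (ν {x | co < x}).toReal + 1/A) := by
    set c1 : ℝ := (σbar * Real.sqrt t / 2) * Real.sqrt co with hc1def
    set c2 : ℝ := (σbar * Real.sqrt t / 2) * A with hc2def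
    set c3 : ℝ := (σbar * Real.sqrt t / 2) / A with hc3def
    set H : ℝ → ℝ := fun z => c1 + c2 * Set.indicator (Set.Ioi co) (fun _ => (1:ℝ)) z + c3 * z
      with hHdef
    have hind_int : Integrable (fun z : ℝ => Set.indicator (Set.Ioi co) (fun _ => (1:ℝ)) z) ν :=
      (integrable_const (1:ℝ)).indicator measurableSet_Ioi
    have hHint : Integrable H ν := by
      apply Integrable.add
      apply Integrable.add
      · exact integrable_const _
      · exact hind_int.const_mul _
      · exact hid_int.const_mul _
    have hGH : (∫ z, G z ∂ν) ≤ ∫ z, H z ∂ν := by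
      apply integral_mono_ae hGint hHint
      filter_upwards [hae0] with z hz
      have h1 : G z ≤ σbar * Real.sqrt (z*t) / 2 := by
        have := stdN_sub_le (σbar * Real.sqrt (z*t) / 2) (by positivity)
        simp only [hGdef]
        linarith
      have hsz : Real.sqrt (z*t) = Real.sqrt z * Real.sqrt t := Real.sqrt_mul hz t
      have h2 : Real.sqrt z ≤ Real.sqrt co + A * Set.indicator (Set.Ioi co) (fun _ => (1:ℝ)) z
          + z / A := by
        rcases le_or_gt z co with hzc | hzc
        · have hind : (0:ℝ) ≤ Set.indicator (Set.Ioi co) (fun _ => (1:ℝ)) z :=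
            Set.indicator_nonneg (fun _ _ => zero_le_one) z
          have h5 := Real.sqrt_le_sqrt hzc
          have hza : 0 ≤ z / A := by positivity
          nlinarith
        · have hind : Set.indicator (Set.Ioi co) (fun _ => (1:ℝ)) z = 1 :=
            Set.indicator_of_mem hzc _
          rw [hind]
          have hsco : 0 ≤ Real.sqrt co := Real.sqrt_nonneg _
          rcases le_or_gt (Real.sqrt z) A with hcase2 | hcase2
          · have hza : 0 ≤ z / A := by positivity
            nlinarith
          · have hzsq : Real.sqrt z * Real.sqrt z = z := Real.mul_self_sqrt hz
            have h6 : A * Real.sqrt z < z := by nlinarith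
            have h7 : Real.sqrt z < z / A := by
              rw [lt_div_iff₀ hA]; nlinarith
            nlinarith
      have h4 : (σbar * Real.sqrt t / 2) * Real.sqrt z ≤ H z := by
        have h5 := mul_le_mul_of_nonneg_left h2 (show (0:ℝ) ≤ σbar * Real.sqrt t / 2 by positivity)
        simp only [hHdef, hc1def, hc2def, hc3def]
        calc (σbar * Real.sqrt t / 2) * Real.sqrt z
            ≤ (σbar * Real.sqrt t / 2) * (Real.sqrt co
              + A * Set.indicator (Set.Ioi co) (fun _ => (1:ℝ)) z + z / A) := h5
          _ = _ := by ring
      calc G z ≤ σbar * Real.sqrt (z*t) / 2 := h1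
        _ = (σbar * Real.sqrt t / 2) * Real.sqrt z := by rw [hsz]; ring
        _ ≤ H z := h4
    have hf1 : Integrable (fun z : ℝ => c1 + c2 * Set.indicator (Set.Ioi co) (fun _ => (1:ℝ)) z) ν :=
      (integrable_const c1).add (hind_int.const_mul c2)
    have hg1 : Integrable (fun z : ℝ => c3 * z) ν := hid_int.const_mul c3
    have hHval : (∫ z, H z ∂ν) = c1 + c2 * (ν (Set.Ioi co)).toReal + c3 * (∫ z, z ∂ν) := by
      simp only [hHdef]
      rw [integral_add hf1 hg1,
        integral_add (integrable_const c1) (hind_int.const_mul c2),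
        integral_const, integral_const_mul, integral_const_mul,
        integral_indicator_const (1:ℝ) measurableSet_Ioi]
      simp [measureReal_def]
    have hioi : (ν (Set.Ioi co)).toReal = (ν {x | co < x}).toReal := rfl
    have hb3 : c3 * (∫ z, z ∂ν) ≤ c3 * 1 := by
      apply mul_le_mul_of_nonneg_left hid_le
      rw [hc3def]; positivity
    have hc3e : c3 * 1 = (σbar * Real.sqrt t / 2) * (1/A) := by
      rw [hc3def]; field_simp
    calc (∫ z, G z ∂ν) ≤ ∫ z, H z ∂ν := hGH
      _ = c1 + c2 * (ν (Set.Ioi co)).toReal + c3 * (∫ z, z ∂ν) := hHval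
      _ ≤ c1 + c2 * (ν {x | co < x}).toReal + (σbar * Real.sqrt t / 2) * (1/A) := by
          rw [hioi] at *
          linarith
      _ = (σbar * Real.sqrt t / 2) *
            (Real.sqrt co + A * (ν {x | co < x}).toReal + 1/A) := by
          rw [hc1def, hc2def]; ring
  rw [hcall_eq]
  linarith


set_option maxHeartbeats 1000000 in
/-- Case 1: if `0 < β < 1` and `−min(1/2,β) < δ ≤ 0`, or `β = δ = 0`,
then `σ̂_t → 0` as `t → 0⁺`. -/
theorem stmt12 (α kbar σbar ηbar β δ : ℝ) (hα : α ∈ Set.Ioo (0:ℝ) 1)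
    (hk : 0 < kbar) (hσ : 0 < σbar) (hη : 0 < ηbar)
    (hcase : (0 < β ∧ β < 1 ∧ -min (1/2) β < δ ∧ δ ≤ 0) ∨ (β = 0 ∧ δ = 0))
    (μ : ℝ → Measure ℝ)
    (hprob : ∀ t > 0, IsProbabilityMeasure (μ t))
    (hsupp : ∀ t > 0, μ t (Set.Iio 0) = 0)
    (hlap : ∀ t > 0, ∀ u ≥ 0,
      (∫ x, Real.exp (-u * x) ∂(μ t)) = ATSLaplace α kbar β t u)
    (σhat : ℝ → ℝ) (hσpos : ∀ t > 0, 0 < σhat t)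
    (hiv : ∀ t > 0,
      stdN (σhat t * Real.sqrt t / 2) - stdN (-(σhat t * Real.sqrt t / 2)) =
        ATSCall α kbar σbar ηbar β δ (μ t) t) :
    Tendsto σhat (𝓝[>] (0:ℝ)) (𝓝 0) := by
  obtain ⟨hα0, hα1⟩ := hα
  have hβ1 : β < 1 := by
    rcases hcase with ⟨_, h, _, _⟩ | ⟨h, _⟩
    · exact h
    · rw [h]; norm_num
  have hδhalf : -(1/2 : ℝ) < δ := by
    rcases hcase with ⟨hb0, hb1, hd, _⟩ | ⟨_, hd⟩
    · have h1 : min (1/2 : ℝ) β ≤ 1/2 := min_le_left _ _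
      linarith
    · rw [hd]; norm_num
  rw [tendsto_order]
  constructor
  · intro b hb
    filter_upwards [self_mem_nhdsWithin] with t ht
    exact hb.trans (hσpos t ht)
  intro ε hε
  set q0 : ℝ := ε / (8 * σbar) with hq0def
  have hq0 : 0 < q0 := by positivity
  set co : ℝ := (q0/3)^2 with hcodef
  have hco : 0 < co := by positivity
  have hsqco : Real.sqrt co = q0/3 := by
    rw [hcodef, Real.sqrt_sq (by positivity)]
  set A : ℝ := 3 / q0 with hAdef
  have hA : 0 < A := by positivity
  have h1mα : (0:ℝ) < 1 - α := by linarith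
  set K : ℝ := ((1 - α)/α) * (1/kbar) * ((1/co) * kbar / (1 - α)) ^ α with hKdef
  have hK : 0 < K := by
    have : (0:ℝ) < ((1/co) * kbar / (1 - α)) ^ α := Real.rpow_pos_of_pos (by positivity) α
    positivity
  have hr : (0:ℝ) < (1 - β) * (1 - α) := by nlinarith
  have hhalfδ : (0:ℝ) < 1/2 + δ := by linarith
  have h1δ : (0:ℝ) < 1 + δ := by linarith
  have E1 := eventually_rpow_le hr (show (0:ℝ) < q0^2/9/(2*K) by positivity)
  have E2 := eventually_rpow_le hhalfδ (show (0:ℝ) < ε/(48*σbar^2*ηbar) by positivity)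
  have E3 := eventually_rpow_le h1δ (show (0:ℝ) < 1/(σbar^2*ηbar) by positivity)
  have E4 : ∀ᶠ t in 𝓝[>] (0:ℝ), t < (2/ε)^2 := by
    have h4 : ∀ᶠ t in 𝓝 (0:ℝ), t < (2/ε)^2 :=
      Filter.Tendsto.eventually_lt_const (by positivity) tendsto_id
    exact h4.filter_mono nhdsWithin_le_nhds
  filter_upwards [self_mem_nhdsWithin, E1, E2, E3, E4] with t htmem hE1 hE2 hE3 hE4
  have ht : 0 < t := htmem
  haveI : IsProbabilityMeasure (μ t) := hprob t ht
  have hsupp' := hsupp t ht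
  have hsqt : 0 < Real.sqrt t := Real.sqrt_pos.2 ht
  have htδ : (0:ℝ) < t ^ δ := Real.rpow_pos_of_pos ht δ
  -- drift bounds
  set u0 : ℝ := t * σbar^2 * (ηbar * t ^ δ) with hu0def
  have hu0 : 0 < u0 := by positivity
  set P : ℝ := ATSphi α kbar σbar ηbar β δ t * t with hPdef
  have hPL : P = -Real.log (ATSLaplace α kbar β t u0) := by
    rw [hPdef, ATSphi, div_mul_cancel₀ _ ht.ne']
  have hP0 : 0 ≤ P := by
    rw [hPL]; exact neg_log_L_nonneg hα0 hα1 hk ht hu0.le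
  have hPu : P ≤ u0 := by
    rw [hPL]; exact neg_log_L_le_lin hα0 hα1 hk ht hu0.le
  have hu0t : u0 = σbar^2*ηbar * t^((1:ℝ)+δ) := by
    rw [hu0def, Real.rpow_add ht, Real.rpow_one]; ring
  have hu0le1 : u0 ≤ 1 := by
    rw [hu0t]
    have h5 := mul_le_mul_of_nonneg_left hE3 (show (0:ℝ) ≤ σbar^2*ηbar by positivity)
    calc σbar^2*ηbar * t^((1:ℝ)+δ) ≤ σbar^2*ηbar * (1/(σbar^2*ηbar)) := h5
      _ = 1 := by field_simp
  have hexp_term : Real.exp P - 1 ≤ ε * Real.sqrt t / 16 := by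
    have h1 : Real.exp P - 1 ≤ P * Real.exp P := by
      have h2 := Real.add_one_le_exp (-P)
      have h3 := mul_le_mul_of_nonneg_right h2 (Real.exp_pos P).le
      rw [← Real.exp_add] at h3
      simp only [neg_add_cancel, Real.exp_zero] at h3
      nlinarith
    have h2 : P * Real.exp P ≤ u0 * Real.exp u0 := by
      have h2a := Real.exp_le_exp.2 hPu
      nlinarith [Real.exp_pos P, Real.exp_pos u0]
    have h3 : Real.exp u0 ≤ 3 := by
      have h4 := Real.exp_le_exp.2 hu0le1
      have h5 := Real.exp_one_lt_d9
      linarith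
    have h6 : u0 * Real.exp u0 ≤ 3 * u0 := by nlinarith
    have h7 : 3 * u0 ≤ ε * Real.sqrt t / 16 := by
      have h8 : t^((1:ℝ)+δ) = Real.sqrt t * t^((1:ℝ)/2+δ) := by
        rw [Real.sqrt_eq_rpow, ← Real.rpow_add ht]
        congr 1
        ring
      have h9 := mul_le_mul_of_nonneg_left hE2
        (show (0:ℝ) ≤ 3*(σbar^2*ηbar)*Real.sqrt t by positivity)
      calc 3 * u0 = 3*(σbar^2*ηbar)*Real.sqrt t * t^((1:ℝ)/2+δ) := by
            rw [hu0t, h8]; ring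
        _ ≤ 3*(σbar^2*ηbar)*Real.sqrt t * (ε/(48*σbar^2*ηbar)) := h9
        _ = ε * Real.sqrt t / 16 := by field_simp; ring
    linarith
  have htail : (μ t {x | co < x}).toReal ≤ q0^2/9 := by
    have h1 := tail_bound hsupp' hco (hlap t ht (1/co) (by positivity))
    have h2 := one_sub_L_le (β := β) hα0 hα1 hk ht (show (0:ℝ) ≤ 1/co by positivity)
    have h3 := neg_log_L_le_pow (β := β) hα0 hα1 hk ht (show (0:ℝ) ≤ 1/co by positivity)
    rw [tail_expr_eq hα0 hα1 hk ht (show (0:ℝ) < 1/co by positivity), ← hKdef] at h3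
    have h4 : K * t ^ ((1-β)*(1-α)) ≤ K * (q0^2/9/(2*K)) :=
      mul_le_mul_of_nonneg_left hE1 hK.le
    have h5 : K * (q0^2/9/(2*K)) = q0^2/9/2 := by field_simp
    linarith
  -- call bound
  have hCB := call_bound α kbar σbar ηbar β δ t co A (μ t) hα0 hα1 hk hσ hη ht hco hA
    hsupp' (hlap t ht)
  rw [← hPdef] at hCB
  have hCall : ATSCall α kbar σbar ηbar β δ (μ t) t ≤ ε * Real.sqrt t / 8 := by
    have hS : (0:ℝ) ≤ σbar * Real.sqrt t / 2 := by positivity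
    have hin : Real.sqrt co + A * (μ t {x | co < x}).toReal + 1/A ≤ q0 := by
      have hAt : A * (μ t {x | co < x}).toReal ≤ q0/3 := by
        have := mul_le_mul_of_nonneg_left htail hA.le
        calc A * (μ t {x | co < x}).toReal ≤ A * (q0^2/9) := this
          _ = q0/3 := by rw [hAdef]; field_simp; ring
      have hiA : (1:ℝ)/A = q0/3 := by rw [hAdef]; field_simp
      rw [hsqco, hiA]
      linarith
    have h10 := mul_le_mul_of_nonneg_left hin hS
    have h11 : (σbar * Real.sqrt t / 2) * q0 = ε * Real.sqrt t / 16 := by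
      rw [hq0def]; field_simp; ring
    linarith
  by_contra hcon
  push_neg at hcon
  have hm1 : ε * Real.sqrt t / 2 ≤ 1 := by
    have h7 : Real.sqrt t ≤ 2/ε := by
      have := Real.sqrt_le_sqrt hE4.le
      rwa [Real.sqrt_sq (by positivity)] at this
    calc ε * Real.sqrt t / 2 ≤ ε * (2/ε) / 2 := by
          apply div_le_div_of_nonneg_right _ (by norm_num)
          exact mul_le_mul_of_nonneg_left h7 hε.le
      _ = 1 := by field_simp
  have hma : ε * Real.sqrt t / 2 ≤ σhat t * Real.sqrt t / 2 := by
    have := mul_le_mul_of_nonneg_right hcon hsqt.le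
    linarith
  have hge := stdN_sub_ge (ε * Real.sqrt t / 2) (by positivity) hm1
  have hmono1 := stdN_mono hma
  have hmono2 := stdN_mono (neg_le_neg hma)
  have hiveq := hiv t ht
  nlinarith [mul_pos hε hsqt]
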